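/- arXiv:1105.5499 — 2 statements merged into one kernel-verified Lean document; each statement's English description precedes it below -/
import Mathlib

section
/- Let 1 ≤ p₁ < ∞ and set β = max(2, p₁). Then there exists a constant C > 0 such that for every N ∈ ℕ with N ≥ 4 and n = ⌊N/4⌋, the n-th Kolmogorov number of the identity map from ℓ_{p₁}^N to ℓ_∞^N satisfies d_n(id : ℓ_{p₁}^N → ℓ_∞^N) ≥ C · n^{-1/β}. -/
open scoped ENNReal BigOperators

/-- The ℓ_p quasi-norm on ℝ^N, for `p : ℝ≥0∞` (with `p = ∞` giving the sup-norm). -/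
noncomputable def pNorm (p : ℝ≥0∞) {N : ℕ} (x : Fin N → ℝ) : ℝ :=
  if p = ∞ then ⨆ i, |x i| else (∑ i, |x i| ^ p.toReal) ^ (1 / p.toReal)

/-- The n-th Kolmogorov number of the identity map `id : ℓ_p^N → ℓ_q^N`. -/
noncomputable def kolmogorovNumber (p q : ℝ≥0∞) (N n : ℕ) : ℝ :=
  sInf { r : ℝ | ∃ V : Submodule ℝ (Fin N → ℝ), Module.finrank ℝ (↥V) < n ∧
    r = sSup { s : ℝ | ∃ x : Fin N → ℝ, pNorm p x ≤ 1 ∧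
      s = sInf { t : ℝ | ∃ v ∈ V, t = pNorm q (x - v) } } }

/-- The n-th Gelfand number of the identity map `id : ℓ_p^N → ℓ_q^N`. -/
noncomputable def gelfandNumber (p q : ℝ≥0∞) (N n : ℕ) : ℝ :=
  sInf { r : ℝ | ∃ M : Submodule ℝ (Fin N → ℝ), N - Module.finrank ℝ (↥M) < n ∧
    r = sSup { s : ℝ | ∃ x ∈ M, pNorm p x ≤ 1 ∧ s = pNorm q x } }

/-- The n-th approximation number of the identity map `id : ℓ_p^N → ℓ_q^N`. -/
noncomputable def approxNumber (p q : ℝ≥0∞) (N n : ℕ) : ℝ :=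
  sInf { r : ℝ | ∃ L : (Fin N → ℝ) →ₗ[ℝ] (Fin N → ℝ),
    Module.finrank ℝ (↥(LinearMap.range L)) < n ∧
    r = sSup { s : ℝ | ∃ x : Fin N → ℝ, pNorm p x ≤ 1 ∧ s = pNorm q (x - L x) } }

namespace KolmogorovLowerAux

lemma pNorm_top_nonneg {N : ℕ} (x : Fin N → ℝ) : 0 ≤ pNorm ∞ x := by
  simp only [pNorm, if_pos rfl]
  exact Real.iSup_nonneg fun i => abs_nonneg _

lemma abs_le_pNorm_top {N : ℕ} (x : Fin N → ℝ) (j : Fin N) : |x j| ≤ pNorm ∞ x := by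
  simp only [pNorm, if_pos rfl]
  exact le_ciSup (f := fun i => |x i|) (Set.Finite.bddAbove (Set.finite_range _)) j

lemma pNorm_ofReal {N : ℕ} {p₁ : ℝ} (hp : 0 ≤ p₁) (x : Fin N → ℝ) :
    pNorm (ENNReal.ofReal p₁) x = (∑ i, |x i| ^ p₁) ^ (1 / p₁) := by
  simp [pNorm, ENNReal.ofReal_ne_top, ENNReal.toReal_ofReal hp]

lemma abs_le_pNorm {N : ℕ} {p₁ : ℝ} (hp : 1 ≤ p₁) (x : Fin N → ℝ) (j : Fin N) :
    |x j| ≤ pNorm (ENNReal.ofReal p₁) x := by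
  have hp0 : (0:ℝ) < p₁ := by linarith
  rw [pNorm_ofReal hp0.le]
  have h1 : |x j| ^ p₁ ≤ ∑ i, |x i| ^ p₁ :=
    Finset.single_le_sum (fun i _ => Real.rpow_nonneg (abs_nonneg _) _) (Finset.mem_univ j)
  calc |x j| = (|x j| ^ p₁) ^ (1/p₁) := by
        rw [one_div, Real.rpow_rpow_inv (abs_nonneg _) hp0.ne']
    _ ≤ (∑ i, |x i| ^ p₁) ^ (1/p₁) :=
        Real.rpow_le_rpow (Real.rpow_nonneg (abs_nonneg _) _) h1 (by positivity)

lemma pNorm_top_le {N : ℕ} (hN : 0 < N) {p₁ : ℝ} (hp : 1 ≤ p₁) (x : Fin N → ℝ) :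
    pNorm ∞ x ≤ pNorm (ENNReal.ofReal p₁) x := by
  haveI : Nonempty (Fin N) := Fin.pos_iff_nonempty.mp hN
  calc pNorm ∞ x = ⨆ i, |x i| := by simp [pNorm]
    _ ≤ _ := ciSup_le fun j => abs_le_pNorm hp x j

lemma sum_le_mul_pNorm_top {N : ℕ} (lam x v : Fin N → ℝ)
    (hv : ∑ j, lam j * v j = 0) :
    ∑ j, lam j * x j ≤ (∑ j, |lam j|) * pNorm ∞ (x - v) := by
  have h1 : ∑ j, lam j * x j = ∑ j, lam j * (x j - v j) := by
    simp [mul_sub, Finset.sum_sub_distrib, hv]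
  rw [h1]
  calc ∑ j, lam j * (x j - v j) ≤ ∑ j, |lam j| * pNorm ∞ (x - v) := by
        apply Finset.sum_le_sum
        intro j _
        have h2 : |x j - v j| ≤ pNorm ∞ (x - v) := by
          simpa using abs_le_pNorm_top (x - v) j
        calc lam j * (x j - v j) ≤ |lam j * (x j - v j)| := le_abs_self _
          _ = |lam j| * |x j - v j| := abs_mul _ _
          _ ≤ |lam j| * pNorm ∞ (x - v) := mul_le_mul_of_nonneg_left h2 (abs_nonneg _)
    _ = (∑ j, |lam j|) * pNorm ∞ (x - v) := (Finset.sum_mul _ _ _).symm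

lemma sum_abs_sq_le {N : ℕ} (lam : Fin N → ℝ) :
    (∑ j, |lam j|) ^ 2 ≤ N * ∑ j, lam j ^ 2 := by
  have := Finset.sum_mul_sq_le_sq_mul_sq Finset.univ (fun _ => (1:ℝ)) (fun j => |lam j|)
  simpa [Finset.card_univ, sq_abs] using this

lemma mul_sign_eq_abs (a : ℝ) : a * Real.sign a = |a| := by
  rcases lt_trichotomy a 0 with h | h | h
  · rw [Real.sign_of_neg h, abs_of_neg h]; ring
  · simp [h]
  · rw [Real.sign_of_pos h, abs_of_pos h]; ring

lemma abs_sign_le_one (a : ℝ) : |Real.sign a| ≤ 1 := by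
  rcases lt_trichotomy a 0 with h | h | h
  · rw [Real.sign_of_neg h]; norm_num
  · simp [h]
  · rw [Real.sign_of_pos h]; norm_num

lemma exists_good_lambda (N : ℕ) (hN : 0 < N) (V : Submodule ℝ (Fin N → ℝ)) :
    ∃ (lam : Fin N → ℝ) (i : Fin N),
      (∀ v ∈ V, ∑ j, lam j * v j = 0) ∧
      (∑ j, lam j ^ 2 = lam i) ∧
      ((N : ℝ) - (Module.finrank ℝ V : ℝ)) / N ≤ lam i := by
  classical
  haveI : Nonempty (Fin N) := Fin.pos_iff_nonempty.mp hN
  let e : (Fin N → ℝ) ≃ₗ[ℝ] EuclideanSpace ℝ (Fin N) :=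
    (WithLp.linearEquiv 2 ℝ (Fin N → ℝ)).symm
  set V' : Submodule ℝ (EuclideanSpace ℝ (Fin N)) := V.map (e : (Fin N → ℝ) →ₗ[ℝ] _) with hV'
  have hfr : Module.finrank ℝ V' = Module.finrank ℝ V := LinearEquiv.finrank_map_eq e V
  set W := V'ᗮ with hW
  set d := Module.finrank ℝ W with hd
  have hdim : Module.finrank ℝ V + d = N := by
    rw [← hfr, hd, hW, V'.finrank_add_finrank_orthogonal, finrank_euclideanSpace_fin]
  let b := stdOrthonormalBasis ℝ W
  let u : Fin d → EuclideanSpace ℝ (Fin N) := fun k => (b k : EuclideanSpace ℝ (Fin N))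
  have hu : ∀ k l, (∑ j, u k j * u l j) = if k = l then (1:ℝ) else 0 := by
    intro k l
    have h := orthonormal_iff_ite.mp b.orthonormal k l
    rw [Submodule.coe_inner] at h
    rw [PiLp.inner_apply] at h
    simp only [RCLike.inner_apply, starRingEnd_apply, star_trivial] at h
    rw [← h]; exact Finset.sum_congr rfl fun j _ => mul_comm _ _
  have huV : ∀ k, ∀ v ∈ V, ∑ j, u k j * v j = 0 := by
    intro k v hv
    have hv' : (e v) ∈ V' := Submodule.mem_map_of_mem hv
    have h0 : (inner ℝ (e v) (u k) : ℝ) = 0 :=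
      (Submodule.mem_orthogonal V' (u k)).mp (SetLike.coe_mem (b k)) (e v) hv'
    rw [PiLp.inner_apply] at h0
    simp only [RCLike.inner_apply, starRingEnd_apply, star_trivial] at h0
    have he : ∀ j, (e v) j = v j := by
      intro j
      rfl
    rw [show (∑ j, u k j * v j) = ∑ j, (e v) j * u k j from by
      apply Finset.sum_congr rfl; intro j _; rw [he j]; ring]
    rw [← h0]; exact Finset.sum_congr rfl fun j _ => mul_comm _ _
  have hsum : ∑ i, (∑ k, (u k i)^2) = (d:ℝ) := by
    rw [Finset.sum_comm]
    have h1 : ∀ k, ∑ i, (u k i)^2 = 1 := fun k => by simpa [sq] using hu k k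
    simp [h1]
  have hconst : ∑ _i : Fin N, ((d:ℝ)/N) = (d:ℝ) := by
    rw [Finset.sum_const, Finset.card_univ, Fintype.card_fin, nsmul_eq_mul]
    field_simp
  obtain ⟨i, -, hi⟩ := Finset.exists_le_of_sum_le (Finset.univ_nonempty)
    (le_of_eq (hconst.trans hsum.symm))
  refine ⟨fun j => ∑ k, u k i * u k j, i, ?_, ?_, ?_⟩
  · intro v hv
    calc ∑ j, (∑ k, u k i * u k j) * v j
        = ∑ j, ∑ k, u k i * (u k j * v j) := by
          apply Finset.sum_congr rfl; intro j _
          rw [Finset.sum_mul]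
          apply Finset.sum_congr rfl; intro k _; ring
      _ = ∑ k, ∑ j, u k i * (u k j * v j) := Finset.sum_comm
      _ = ∑ k, u k i * ∑ j, u k j * v j := by
          apply Finset.sum_congr rfl; intro k _; rw [Finset.mul_sum]
      _ = 0 := Finset.sum_eq_zero fun k _ => by rw [huV k v hv, mul_zero]
  · calc ∑ j, ((fun j => ∑ k, u k i * u k j) j)^2
        = ∑ j, ∑ k, ∑ l, (u k i * u l i) * (u k j * u l j) := by
          apply Finset.sum_congr rfl; intro j _
          rw [sq, Finset.sum_mul_sum]
          apply Finset.sum_congr rfl; intro k _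
          apply Finset.sum_congr rfl; intro l _; ring
      _ = ∑ k, ∑ l, (u k i * u l i) * ∑ j, u k j * u l j := by
          rw [Finset.sum_comm]
          apply Finset.sum_congr rfl; intro k _
          rw [Finset.sum_comm]
          apply Finset.sum_congr rfl; intro l _
          rw [Finset.mul_sum]
      _ = ∑ k, u k i * u k i := by
          apply Finset.sum_congr rfl; intro k _
          rw [Finset.sum_congr rfl fun l _ => by rw [hu k l]]
          simp
      _ = (fun j => ∑ k, u k i * u k j) i := rfl
  · have hdr : ((N:ℝ) - (Module.finrank ℝ V : ℝ)) = (d:ℝ) := by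
      have h2 : (Module.finrank ℝ V : ℝ) + (d:ℝ) = (N:ℝ) := by exact_mod_cast hdim
      linarith
    rw [hdr]
    simpa [sq] using hi

end KolmogorovLowerAux

open KolmogorovLowerAux in
/-- For `1 ≤ p₁ < ∞` and `β = max(2,p₁)` there is `C > 0` such that for every
`N ≥ 4` and `n = ⌊N/4⌋`, `d_n(id : ℓ_{p₁}^N → ℓ_∞^N) ≥ C·n^{-1/β}`. -/
theorem kolmogorov_lower_quarter (p₁ : ℝ) (hp1 : 1 ≤ p₁) :
    ∃ C : ℝ, 0 < C ∧ ∀ N : ℕ, 4 ≤ N →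
      C * ((N / 4 : ℕ) : ℝ) ^ (-(1 / max 2 p₁)) ≤
        kolmogorovNumber (ENNReal.ofReal p₁) ∞ N (N / 4) := by
  have hp0 : (0:ℝ) < p₁ := by linarith
  refine ⟨1/7, by norm_num, ?_⟩
  intro N hN4
  set n := N / 4 with hn
  have hn1 : 1 ≤ n := by omega
  have hNpos : 0 < N := by omega
  have hnposR : (0:ℝ) < (n:ℝ) := by exact_mod_cast hn1
  have hNposR : (0:ℝ) < (N:ℝ) := by exact_mod_cast hNpos
  have hN7 : (N : ℝ) ≤ 7 * n := by exact_mod_cast (show N ≤ 7 * n by omega)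
  have h4n : 4 * (n:ℝ) ≤ N := by exact_mod_cast (show 4 * n ≤ N by omega)
  set B : ℝ := 1/7 * ((n : ℕ) : ℝ) ^ (-(1 / max 2 p₁)) with hB
  have key : ∀ V : Submodule ℝ (Fin N → ℝ), Module.finrank ℝ V < n →
      ∃ x : Fin N → ℝ, pNorm (ENNReal.ofReal p₁) x ≤ 1 ∧
        ∀ v ∈ V, B ≤ pNorm ∞ (x - v) := by
    intro V hV
    obtain ⟨lam, i, horth, hnorm, hge⟩ := exists_good_lambda N hNpos V
    have hfrn : (Module.finrank ℝ V : ℝ) ≤ (n:ℝ) - 1 := by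
      have h2 : (Module.finrank ℝ V : ℝ) + 1 ≤ (n:ℝ) := by exact_mod_cast hV
      linarith
    have hfrN : (Module.finrank ℝ V : ℝ) < (N:ℝ) := by
      have h2 : Module.finrank ℝ V < N := lt_of_lt_of_le hV (by omega)
      exact_mod_cast h2
    have hsi : 0 < lam i :=
      lt_of_lt_of_le (div_pos (by linarith) hNposR) hge
    have hL0 : 0 < ∑ j, |lam j| := by
      have h1 : lam i ≤ ∑ j, |lam j| :=
        le_trans (le_abs_self _)
          (Finset.single_le_sum (f := fun j => |lam j|) (fun j _ => abs_nonneg _)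
            (Finset.mem_univ i))
      linarith
    rcases le_or_gt 2 p₁ with hp2 | hp2
    · -- case p₁ ≥ 2
      have hmax : max 2 p₁ = p₁ := max_eq_right hp2
      set c : ℝ := (N:ℝ) ^ (-(1/p₁)) with hc
      have hcpos : 0 < c := Real.rpow_pos_of_pos hNposR _
      have hBc : B ≤ c := by
        rw [hB, hmax, hc]
        have hnp : (0:ℝ) < (n:ℝ) ^ (1/p₁) := Real.rpow_pos_of_pos hnposR _
        have hNp : (0:ℝ) < (N:ℝ) ^ (1/p₁) := Real.rpow_pos_of_pos hNposR _
        have h1 : (N:ℝ) ^ (1/p₁) ≤ 7 * (n:ℝ) ^ (1/p₁) := by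
          calc (N:ℝ) ^ (1/p₁) ≤ ((7:ℝ) * n) ^ (1/p₁) :=
                Real.rpow_le_rpow hNposR.le hN7 (by positivity)
            _ = (7:ℝ) ^ (1/p₁) * (n:ℝ) ^ (1/p₁) := Real.mul_rpow (by norm_num) hnposR.le
            _ ≤ 7 * (n:ℝ) ^ (1/p₁) := by
                have h7 : (7:ℝ) ^ (1/p₁) ≤ 7 := by
                  calc (7:ℝ) ^ (1/p₁) ≤ (7:ℝ) ^ (1:ℝ) :=
                        Real.rpow_le_rpow_of_exponent_le (by norm_num)
                          (by rw [div_le_one hp0]; linarith)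
                    _ = 7 := Real.rpow_one _
                nlinarith
        rw [Real.rpow_neg hnposR.le, Real.rpow_neg hNposR.le]
        have h2 : ((7:ℝ) * ((n:ℝ) ^ (1/p₁)))⁻¹ ≤ ((N:ℝ) ^ (1/p₁))⁻¹ :=
          inv_anti₀ hNp h1
        calc 1/7 * ((n:ℝ) ^ (1/p₁))⁻¹ = ((7:ℝ) * ((n:ℝ) ^ (1/p₁)))⁻¹ := by
              rw [mul_inv]; ring
          _ ≤ ((N:ℝ) ^ (1/p₁))⁻¹ := h2
      refine ⟨fun j => Real.sign (lam j) * c, ?_, fun v hv => le_trans hBc ?_⟩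
      · rw [pNorm_ofReal hp0.le]
        have hbound : ∀ j : Fin N, |Real.sign (lam j) * c| ^ p₁ ≤ (N:ℝ)⁻¹ := by
          intro j
          have h1 : |Real.sign (lam j) * c| ≤ c := by
            rw [abs_mul, abs_of_pos hcpos]
            nlinarith [abs_sign_le_one (lam j), abs_nonneg (Real.sign (lam j))]
          calc |Real.sign (lam j) * c| ^ p₁ ≤ c ^ p₁ :=
                Real.rpow_le_rpow (abs_nonneg _) h1 (by linarith)
            _ = (N:ℝ)⁻¹ := by
                rw [hc, ← Real.rpow_mul hNposR.le,
                  show -(1/p₁) * p₁ = -1 by field_simp, Real.rpow_neg_one]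
        calc (∑ j, |Real.sign (lam j) * c| ^ p₁) ^ (1/p₁)
            ≤ (∑ _j : Fin N, (N:ℝ)⁻¹) ^ (1/p₁) :=
              Real.rpow_le_rpow
                (Finset.sum_nonneg fun j _ => Real.rpow_nonneg (abs_nonneg _) _)
                (Finset.sum_le_sum fun j _ => hbound j) (by positivity)
          _ = 1 := by
              rw [Finset.sum_const, Finset.card_univ, Fintype.card_fin, nsmul_eq_mul,
                mul_inv_cancel₀ hNposR.ne', Real.one_rpow]
      · -- c ≤ pNorm ∞ (x - v)
        have hsum := sum_le_mul_pNorm_top lam (fun j => Real.sign (lam j) * c) v (horth v hv)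
        have hval : ∑ j, lam j * (Real.sign (lam j) * c) = (∑ j, |lam j|) * c := by
          rw [Finset.sum_mul]
          apply Finset.sum_congr rfl; intro j _
          rw [← mul_assoc, mul_sign_eq_abs]
        have h2 : (∑ j, |lam j|) * c ≤
            (∑ j, |lam j|) * pNorm ∞ ((fun j => Real.sign (lam j) * c) - v) := by
          rw [← hval]; exact hsum
        exact le_of_mul_le_mul_left h2 hL0
    · -- case p₁ < 2
      have hmax : max 2 p₁ = 2 := max_eq_left hp2.le
      refine ⟨(Pi.single i 1 : Fin N → ℝ), ?_, ?_⟩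
      · rw [pNorm_ofReal hp0.le]
        have hpt : ∀ j : Fin N, |(Pi.single i 1 : Fin N → ℝ) j| ^ p₁ = if j = i then 1 else 0 := by
          intro j
          by_cases h : j = i
          · subst h; simp [Real.one_rpow]
          · simp [Pi.single_eq_of_ne h, Real.zero_rpow hp0.ne', h]
        have hsum1 : ∑ j, |(Pi.single i 1 : Fin N → ℝ) j| ^ p₁ = 1 := by
          simp [hpt]
        rw [hsum1, Real.one_rpow]
      · intro v hv
        have hsum := sum_le_mul_pNorm_top lam (Pi.single i 1 : Fin N → ℝ) v (horth v hv)
        have hpt2 : ∀ j : Fin N, lam j * (Pi.single i 1 : Fin N → ℝ) j = if j = i then lam i else 0 := by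
          intro j
          by_cases h : j = i
          · subst h; simp
          · simp [Pi.single_eq_of_ne h, h]
        have hval : ∑ j, lam j * (Pi.single i 1 : Fin N → ℝ) j = lam i := by
          simp [hpt2]
        set L := ∑ j, |lam j| with hLdef
        set P := pNorm ∞ ((Pi.single i 1 : Fin N → ℝ) - v) with hPdef
        have hP0 : 0 ≤ P := pNorm_top_nonneg _
        have hkey : lam i ≤ L * P := by rw [← hval]; exact hsum
        have hL2 : L^2 ≤ N * lam i := by
          have h3 := sum_abs_sq_le lam
          rw [hnorm] at h3; exact h3
        have hB0 : 0 ≤ B := by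
          rw [hB]; positivity
        have hB2 : B^2 = (49 * (n:ℝ))⁻¹ := by
          have hx : ((n:ℝ) ^ (-(1/2) : ℝ))^2 = (n:ℝ)⁻¹ := by
            rw [sq, ← Real.rpow_add hnposR,
              show (-(1/2) + -(1/2) : ℝ) = -1 by norm_num, Real.rpow_neg_one]
          rw [hB, hmax, mul_pow, hx, mul_inv]
          norm_num
        have hBN : B^2 * N ≤ lam i := by
          refine le_trans ?_ hge
          rw [hB2, inv_mul_eq_div, div_le_div_iff₀ (by positivity) hNposR]
          nlinarith [mul_nonneg (by linarith : (0:ℝ) ≤ (N:ℝ) - 4*n)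
            (by linarith : (0:ℝ) ≤ 7*(n:ℝ) - N), hnposR, hfrn, hnposR.le]
        have hsq : (B*L)^2 ≤ (lam i)^2 := by
          calc (B*L)^2 = B^2 * L^2 := by ring
            _ ≤ B^2 * ((N:ℝ) * lam i) := mul_le_mul_of_nonneg_left hL2 (sq_nonneg B)
            _ = (B^2 * N) * lam i := by ring
            _ ≤ lam i * lam i := mul_le_mul_of_nonneg_right hBN hsi.le
            _ = (lam i)^2 := by ring
        have hBL : B * L ≤ lam i := le_of_pow_le_pow_left₀ two_ne_zero hsi.le hsq
        have h4 : B * L ≤ P * L := by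
          calc B * L ≤ lam i := hBL
            _ ≤ L * P := hkey
            _ = P * L := mul_comm _ _
        exact (mul_le_mul_iff_of_pos_right hL0).mp h4
  -- assemble
  rw [kolmogorovNumber]
  have hne : Set.Nonempty { r : ℝ | ∃ V : Submodule ℝ (Fin N → ℝ),
      Module.finrank ℝ (↥V) < n ∧
      r = sSup { s : ℝ | ∃ x : Fin N → ℝ, pNorm (ENNReal.ofReal p₁) x ≤ 1 ∧
        s = sInf { t : ℝ | ∃ v ∈ V, t = pNorm ∞ (x - v) } } } := by
    refine ⟨_, ⟨⊥, ?_, rfl⟩⟩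
    simpa using (show 0 < n by omega)
  refine le_csInf hne ?_
  rintro r ⟨V, hV, rfl⟩
  obtain ⟨x₀, hx₀, hd⟩ := key V hV
  have hBdd : BddAbove {s : ℝ | ∃ x : Fin N → ℝ, pNorm (ENNReal.ofReal p₁) x ≤ 1 ∧
      s = sInf {t : ℝ | ∃ v ∈ V, t = pNorm ∞ (x - v)}} := by
    refine ⟨1, ?_⟩
    rintro s ⟨x, hx, rfl⟩
    have hmem : pNorm ∞ (x - 0) ∈ {t : ℝ | ∃ v ∈ V, t = pNorm ∞ (x - v)} :=
      ⟨0, V.zero_mem, rfl⟩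
    have hbb : BddBelow {t : ℝ | ∃ v ∈ V, t = pNorm ∞ (x - v)} := by
      refine ⟨0, ?_⟩
      rintro t ⟨v, hv, rfl⟩
      exact pNorm_top_nonneg _
    calc sInf {t : ℝ | ∃ v ∈ V, t = pNorm ∞ (x - v)} ≤ pNorm ∞ (x - 0) :=
          csInf_le hbb hmem
      _ = pNorm ∞ x := by rw [sub_zero]
      _ ≤ pNorm (ENNReal.ofReal p₁) x := pNorm_top_le hNpos hp1 x
      _ ≤ 1 := hx
  have hTne : Set.Nonempty {t : ℝ | ∃ v ∈ V, t = pNorm ∞ (x₀ - v)} := by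
    exact ⟨pNorm ∞ (x₀ - 0), ⟨0, V.zero_mem, rfl⟩⟩
  have h1 : B ≤ sInf {t : ℝ | ∃ v ∈ V, t = pNorm ∞ (x₀ - v)} := by
    refine le_csInf hTne ?_
    rintro t ⟨v, hv, rfl⟩
    exact hd v hv
  exact le_trans h1 (le_csSup hBdd ⟨x₀, hx₀, rfl⟩)
end

section
/- Let 0 < p₁ ≤ 1 and 0 < λ < 1, and set h = 2(1−λ). Then there exists a constant C > 0 such that for every N ∈ ℕ, sup_{n ∈ ℕ} n^{1/h} · a_n(id : ℓ_{p₁}^N → ℓ_∞^N) ≤ C · N^{λ/(2(1−λ))}, where a_n denotes the n-th approximation number. -/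
set_option maxHeartbeats 1000000


open scoped ENNReal BigOperators

lemma sum_abs_le_one {p₁ : ℝ} (h1 : 0 < p₁) (h2 : p₁ ≤ 1) {N : ℕ} (x : Fin N → ℝ)
    (hx : (∑ i, |x i| ^ p₁) ^ (1 / p₁) ≤ 1) : ∑ i, |x i| ≤ 1 := by
  have hS : (0:ℝ) ≤ ∑ i, |x i| ^ p₁ :=
    Finset.sum_nonneg fun i _ => Real.rpow_nonneg (abs_nonneg _) _
  have hsum : ∑ i, |x i| ^ p₁ ≤ 1 := by
    by_contra hgt
    push_neg at hgt
    have h01 : (0:ℝ) < 1 / p₁ := by positivity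
    have : (1:ℝ) < (∑ i, |x i| ^ p₁) ^ (1/p₁) :=
      (Real.one_lt_rpow_iff_of_pos (by linarith)).2 (Or.inl ⟨hgt, h01⟩)
    linarith
  have hterm : ∀ i ∈ Finset.univ, |x i| ≤ |x i| ^ p₁ := by
    intro i _
    rcases eq_or_lt_of_le (abs_nonneg (x i)) with h0 | h0
    · rw [← h0, Real.zero_rpow (ne_of_gt h1)]
    · have hle1 : |x i| ≤ 1 := by
        by_contra hgt1
        push_neg at hgt1
        have h1i : (1:ℝ) < |x i| ^ p₁ := (Real.one_lt_rpow_iff_of_pos h0).2 (Or.inl ⟨hgt1, h1⟩)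
        have hile : |x i| ^ p₁ ≤ ∑ j, |x j| ^ p₁ :=
          Finset.single_le_sum (f := fun j => |x j| ^ p₁)
            (fun j _ => Real.rpow_nonneg (abs_nonneg _) _) (Finset.mem_univ i)
        linarith
      calc |x i| = |x i| ^ (1:ℝ) := (Real.rpow_one _).symm
        _ ≤ |x i| ^ p₁ := Real.rpow_le_rpow_of_exponent_ge h0 hle1 h2
  exact le_trans (Finset.sum_le_sum hterm) hsum

lemma bridge {p₁ : ℝ} (h1 : 0 < p₁) (h2 : p₁ ≤ 1) {N n : ℕ} {ε : ℝ} (hε : 0 ≤ ε)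
    (L : (Fin N → ℝ) →ₗ[ℝ] (Fin N → ℝ))
    (hr : Module.finrank ℝ (LinearMap.range L) < n)
    (hent : ∀ i j : Fin N, |(Pi.single j 1 : Fin N → ℝ) i - L (Pi.single j 1) i| ≤ ε) :
    approxNumber (ENNReal.ofReal p₁) ∞ N n ≤ ε := by
  have hpne : (ENNReal.ofReal p₁) ≠ ∞ := ENNReal.ofReal_ne_top
  have hptr : (ENNReal.ofReal p₁).toReal = p₁ := ENNReal.toReal_ofReal h1.le
  set S := { s : ℝ | ∃ x : Fin N → ℝ, pNorm (ENNReal.ofReal p₁) x ≤ 1 ∧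
      s = pNorm ∞ (x - L x) } with hSdef
  have hmem : sSup S ∈ { r : ℝ | ∃ L' : (Fin N → ℝ) →ₗ[ℝ] (Fin N → ℝ),
      Module.finrank ℝ (↥(LinearMap.range L')) < n ∧
      r = sSup { s : ℝ | ∃ x : Fin N → ℝ, pNorm (ENNReal.ofReal p₁) x ≤ 1 ∧
        s = pNorm ∞ (x - L' x) } } := ⟨L, hr, rfl⟩
  have hbdd : ∀ r ∈ { r : ℝ | ∃ L' : (Fin N → ℝ) →ₗ[ℝ] (Fin N → ℝ),
      Module.finrank ℝ (↥(LinearMap.range L')) < n ∧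
      r = sSup { s : ℝ | ∃ x : Fin N → ℝ, pNorm (ENNReal.ofReal p₁) x ≤ 1 ∧
        s = pNorm ∞ (x - L' x) } }, (0:ℝ) ≤ r := by
    rintro r ⟨L', _, rfl⟩
    apply Real.sSup_nonneg
    rintro s ⟨x, _, rfl⟩
    simp only [pNorm, if_pos rfl]
    exact Real.iSup_nonneg fun i => abs_nonneg _
  have hle : approxNumber (ENNReal.ofReal p₁) ∞ N n ≤ sSup S :=
    csInf_le ⟨0, hbdd⟩ hmem
  refine le_trans hle (Real.sSup_le ?_ hε)
  rintro s ⟨x, hx, rfl⟩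
  simp only [pNorm, if_pos rfl]
  refine Real.iSup_le (fun i => ?_) hε
  -- bound each coordinate
  have hxsum : ∑ j, |x j| ≤ 1 := by
    apply sum_abs_le_one h1 h2
    simpa [pNorm, hpne, hptr] using hx
  have hxdec : x = ∑ j, x j • (Pi.single j 1 : Fin N → ℝ) := by
    conv_lhs => rw [← Finset.univ_sum_single x]
    refine Finset.sum_congr rfl fun j _ => ?_
    rw [← Pi.single_smul, smul_eq_mul, mul_one]
  have hLx : L x = ∑ j, x j • L (Pi.single j 1) := by
    conv_lhs => rw [hxdec]
    rw [map_sum]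
    exact Finset.sum_congr rfl fun j _ => map_smul L _ _
  have hxi : ∑ j, x j * (Pi.single j 1 : Fin N → ℝ) i = x i := by
    simp [Pi.single_apply, mul_ite]
  have hLxi : L x i = ∑ j, x j * L (Pi.single j 1) i := by
    rw [hLx, Finset.sum_apply]
    exact Finset.sum_congr rfl fun j _ => by simp [smul_eq_mul]
  have hco : (x - L x) i = ∑ j, x j * ((Pi.single j 1 : Fin N → ℝ) i - L (Pi.single j 1) i) := by
    have hthis : (x - L x) i = x i - L x i := rfl
    rw [hthis, hLxi, ← hxi, ← Finset.sum_sub_distrib]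
    exact Finset.sum_congr rfl fun j _ => (mul_sub _ _ _).symm
  rw [hco]
  calc |∑ j, x j * ((Pi.single j 1 : Fin N → ℝ) i - L (Pi.single j 1) i)|
      ≤ ∑ j, |x j * ((Pi.single j 1 : Fin N → ℝ) i - L (Pi.single j 1) i)| := Finset.abs_sum_le_sum_abs _ _
    _ ≤ ∑ j, |x j| * ε := by
        refine Finset.sum_le_sum fun j _ => ?_
        rw [abs_mul]
        exact mul_le_mul_of_nonneg_left (hent i j) (abs_nonneg _)
    _ = (∑ j, |x j|) * ε := by rw [Finset.sum_mul]
    _ ≤ 1 * ε := mul_le_mul_of_nonneg_right hxsum hε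
    _ = ε := one_mul ε


open scoped BigOperators

noncomputable section

def sg : Bool → ℝ := fun b => if b then 1 else -1

lemma sg_pm (b : Bool) : sg b = 1 ∨ sg b = -1 := by cases b <;> simp [sg]

lemma mgf {D : ℕ} (u : Fin D → ℝ) (hu : ∀ k, u k = 1 ∨ u k = -1) (c : ℝ) :
    ∑ w : Fin D → Bool, Real.exp (∑ k, c * (u k * sg (w k))) = (2 * Real.cosh c) ^ D := by
  have h1 : ∀ w : Fin D → Bool, Real.exp (∑ k, c * (u k * sg (w k)))
      = ∏ k, Real.exp (c * (u k * sg (w k))) := fun w => Real.exp_sum _ _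
  simp_rw [h1]
  rw [← Fintype.prod_sum (fun k b => Real.exp (c * (u k * sg b)))]
  have hk : ∀ k, (∑ b : Bool, Real.exp (c * (u k * sg b))) = 2 * Real.cosh c := by
    intro k
    rw [Fintype.sum_bool]
    rcases hu k with h | h
    · have e1 : c * (u k * sg true) = c := by simp [sg, h]
      have e2 : c * (u k * sg false) = -c := by simp [sg, h]
      rw [e1, e2, Real.cosh_eq]; ring
    · have e1 : c * (u k * sg true) = -c := by simp [sg, h]
      have e2 : c * (u k * sg false) = c := by simp [sg, h]
      rw [e1, e2, Real.cosh_eq]; ring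
  rw [Finset.prod_congr rfl (fun k _ => hk k), Finset.prod_const, Finset.card_univ,
    Fintype.card_fin]

lemma count_one_side {D : ℕ} (hD : 0 < D) (u : Fin D → ℝ) (hu : ∀ k, u k = 1 ∨ u k = -1)
    (t : ℝ) (ht : 0 ≤ t) :
    ((Finset.univ.filter (fun w : Fin D → Bool => t < ∑ k, u k * sg (w k))).card : ℝ)
      ≤ 2 ^ D * Real.exp (-(t ^ 2) / (2 * D)) := by
  set c := t / D with hc
  have hDR : (0:ℝ) < D := by exact_mod_cast hD
  have hcn : 0 ≤ c := div_nonneg ht hDR.le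
  have key : ∀ w ∈ Finset.univ.filter (fun w : Fin D → Bool => t < ∑ k, u k * sg (w k)),
      (1:ℝ) ≤ Real.exp (∑ k, c * (u k * sg (w k))) * Real.exp (-(c * t)) := by
    intro w hw
    rw [Finset.mem_filter] at hw
    rw [← Real.exp_add]
    have : c * t ≤ ∑ k, c * (u k * sg (w k)) := by
      rw [← Finset.mul_sum]
      exact mul_le_mul_of_nonneg_left hw.2.le hcn
    rw [← Real.exp_zero]
    exact Real.exp_le_exp.2 (by linarith)
  calc ((Finset.univ.filter (fun w : Fin D → Bool => t < ∑ k, u k * sg (w k))).card : ℝ)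
      = ∑ _w ∈ Finset.univ.filter (fun w : Fin D → Bool => t < ∑ k, u k * sg (w k)), (1:ℝ) := by
        rw [Finset.sum_const, nsmul_eq_mul, mul_one]
    _ ≤ ∑ w ∈ Finset.univ.filter (fun w : Fin D → Bool => t < ∑ k, u k * sg (w k)),
        Real.exp (∑ k, c * (u k * sg (w k))) * Real.exp (-(c * t)) := Finset.sum_le_sum key
    _ ≤ ∑ w : Fin D → Bool, Real.exp (∑ k, c * (u k * sg (w k))) * Real.exp (-(c * t)) := by
        apply Finset.sum_le_sum_of_subset_of_nonneg (Finset.filter_subset _ _)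
        intro w _ _; positivity
    _ = (2 * Real.cosh c) ^ D * Real.exp (-(c * t)) := by
        rw [← Finset.sum_mul, mgf u hu c]
    _ ≤ (2 * Real.exp (c ^ 2 / 2)) ^ D * Real.exp (-(c * t)) := by
        apply mul_le_mul_of_nonneg_right _ (Real.exp_nonneg _)
        apply pow_le_pow_left₀ (by positivity)
        exact mul_le_mul_of_nonneg_left (Real.cosh_le_exp_half_sq c) (by norm_num)
    _ = 2 ^ D * Real.exp (D * (c ^ 2 / 2) + -(c * t)) := by
        rw [mul_pow, ← Real.exp_nat_mul, Real.exp_add]; ring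
    _ = 2 ^ D * Real.exp (-(t ^ 2) / (2 * D)) := by
        congr 1
        congr 1
        rw [hc]
        field_simp
        ring

lemma count_two_side {D : ℕ} (hD : 0 < D) (u : Fin D → ℝ) (hu : ∀ k, u k = 1 ∨ u k = -1)
    (t : ℝ) (ht : 0 ≤ t) :
    ((Finset.univ.filter (fun w : Fin D → Bool => t < |∑ k, u k * sg (w k)|)).card : ℝ)
      ≤ 2 * (2 ^ D * Real.exp (-(t ^ 2) / (2 * D))) := by
  have hsub : Finset.univ.filter (fun w : Fin D → Bool => t < |∑ k, u k * sg (w k)|)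
      ⊆ (Finset.univ.filter (fun w : Fin D → Bool => t < ∑ k, u k * sg (w k)))
        ∪ (Finset.univ.filter (fun w : Fin D → Bool => t < ∑ k, (-u) k * sg (w k))) := by
    intro w hw
    rw [Finset.mem_filter] at hw
    rw [Finset.mem_union, Finset.mem_filter, Finset.mem_filter]
    rcases lt_abs.1 hw.2 with h | h
    · exact Or.inl ⟨Finset.mem_univ w, h⟩
    · refine Or.inr ⟨Finset.mem_univ w, ?_⟩
      have : -∑ k, u k * sg (w k) = ∑ k, (-u) k * sg (w k) := by
        rw [← Finset.sum_neg_distrib]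
        exact Finset.sum_congr rfl fun k _ => by simp [neg_mul]
      linarith [this ▸ h]
  have hone := count_one_side hD u hu t ht
  have htwo := count_one_side hD (-u) (fun k => by rcases hu k with h | h <;> simp [h]) t ht
  calc ((Finset.univ.filter (fun w : Fin D → Bool => t < |∑ k, u k * sg (w k)|)).card : ℝ)
      ≤ (((Finset.univ.filter (fun w : Fin D → Bool => t < ∑ k, u k * sg (w k)))
        ∪ (Finset.univ.filter (fun w : Fin D → Bool => t < ∑ k, (-u) k * sg (w k)))).card : ℝ) := by
        exact_mod_cast Finset.card_le_card hsub
    _ ≤ (((Finset.univ.filter (fun w : Fin D → Bool => t < ∑ k, u k * sg (w k))).card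
        + (Finset.univ.filter (fun w : Fin D → Bool => t < ∑ k, (-u) k * sg (w k))).card : ℕ) : ℝ) := by
        exact_mod_cast Finset.card_union_le _ _
    _ ≤ 2 * (2 ^ D * Real.exp (-(t ^ 2) / (2 * D))) := by
        push_cast
        linarith

lemma exists_good_vectors (N D : ℕ) (hD : 0 < D) (hN : 1 ≤ N) :
    ∃ V : Fin N → Fin D → ℝ, (∀ i k, V i k = 1 ∨ V i k = -1) ∧
      ∀ i j, i ≠ j → |∑ k, V i k * V j k| ≤ Real.sqrt (2 * D * Real.log (2 * N)) := by
  set t := Real.sqrt (2 * D * Real.log (2 * N)) with htdef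
  have hNR : (1:ℝ) ≤ N := by exact_mod_cast hN
  have hlog : 0 ≤ Real.log (2 * N) := Real.log_nonneg (by linarith)
  have ht : 0 ≤ t := Real.sqrt_nonneg _
  have ht2 : t ^ 2 = 2 * D * Real.log (2 * N) := Real.sq_sqrt (by positivity)
  have hDR : (0:ℝ) < D := by exact_mod_cast hD
  have hexp : Real.exp (-(t ^ 2) / (2 * D)) = 1 / (2 * N) := by
    have harg : -(t ^ 2) / (2 * D) = -Real.log (2 * N) := by
      rw [ht2]; field_simp
    rw [harg, Real.exp_neg, Real.exp_log (by linarith)]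
    rw [one_div]
  suffices h : ∀ m : ℕ, m ≤ N → ∃ V : Fin m → Fin D → ℝ,
      (∀ i k, V i k = 1 ∨ V i k = -1) ∧
      ∀ i j, i ≠ j → |∑ k, V i k * V j k| ≤ t by exact h N le_rfl
  intro m
  induction m with
  | zero => exact fun _ => ⟨fun i => i.elim0, fun i => i.elim0, fun i => i.elim0⟩
  | succ m ih =>
    intro hm
    obtain ⟨V, hent, hpair⟩ := ih (le_trans (Nat.le_succ m) hm)
    have hmlt : (m : ℝ) ≤ (N : ℝ) - 1 := by
      have : m + 1 ≤ N := hm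
      have : (m:ℝ) + 1 ≤ N := by exact_mod_cast this
      linarith
    have hex : ∃ w : Fin D → Bool, ∀ i : Fin m, |∑ k, V i k * sg (w k)| ≤ t := by
      by_contra hcon
      push_neg at hcon
      have hsub : (Finset.univ : Finset (Fin D → Bool)) ⊆ Finset.univ.biUnion
          (fun i : Fin m => Finset.univ.filter (fun w : Fin D → Bool => t < |∑ k, V i k * sg (w k)|)) := by
        intro w _
        obtain ⟨i, hi⟩ := hcon w
        exact Finset.mem_biUnion.2 ⟨i, Finset.mem_univ i, Finset.mem_filter.2 ⟨Finset.mem_univ w, hi⟩⟩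
      have hcard : ((2:ℝ)) ^ D ≤ ∑ i : Fin m,
          ((Finset.univ.filter (fun w : Fin D → Bool => t < |∑ k, V i k * sg (w k)|)).card : ℝ) := by
        have h1 : (Finset.univ : Finset (Fin D → Bool)).card ≤ (Finset.univ.biUnion
            (fun i : Fin m => Finset.univ.filter (fun w : Fin D → Bool => t < |∑ k, V i k * sg (w k)|))).card :=
          Finset.card_le_card hsub
        have h2 : (Finset.univ.biUnion
            (fun i : Fin m => Finset.univ.filter (fun w : Fin D → Bool => t < |∑ k, V i k * sg (w k)|))).card
            ≤ ∑ i : Fin m, (Finset.univ.filter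
              (fun w : Fin D → Bool => t < |∑ k, V i k * sg (w k)|)).card :=
          Finset.card_biUnion_le
        have h3 : (Finset.univ : Finset (Fin D → Bool)).card = 2 ^ D := by
          rw [Finset.card_univ, Fintype.card_fun, Fintype.card_bool, Fintype.card_fin]
        have := le_trans h1 h2
        rw [h3] at this
        calc ((2:ℝ)) ^ D = ((2 ^ D : ℕ) : ℝ) := by push_cast; ring
          _ ≤ ((∑ i : Fin m, (Finset.univ.filter
              (fun w : Fin D → Bool => t < |∑ k, V i k * sg (w k)|)).card : ℕ) : ℝ) := by
            exact_mod_cast this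
          _ = _ := by push_cast; ring
      have hbound : ∑ i : Fin m,
          ((Finset.univ.filter (fun w : Fin D → Bool => t < |∑ k, V i k * sg (w k)|)).card : ℝ)
          ≤ (m : ℝ) * (2 * (2 ^ D * (1 / (2 * N)))) := by
        rw [← hexp]
        calc _ ≤ ∑ _i : Fin m, 2 * ((2:ℝ) ^ D * Real.exp (-(t ^ 2) / (2 * D))) :=
              Finset.sum_le_sum fun i _ => count_two_side hD (V i) (hent i) t ht
          _ = (m : ℝ) * (2 * (2 ^ D * Real.exp (-(t ^ 2) / (2 * D)))) := by
              rw [Finset.sum_const, Finset.card_univ, Fintype.card_fin, nsmul_eq_mul]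
      have hfin : (m : ℝ) * (2 * (2 ^ D * (1 / (2 * N)))) < 2 ^ D := by
        have h2D : (0:ℝ) < 2 ^ D := by positivity
        have hN0 : (0:ℝ) < N := by linarith
        have heq : (m : ℝ) * (2 * (2 ^ D * (1 / (2 * N)))) = ((m:ℝ) / N) * 2 ^ D := by
          field_simp
        rw [heq]
        have hmN : (m : ℝ) / N < 1 := by
          rw [div_lt_one hN0]; linarith
        nlinarith
      linarith
    obtain ⟨w, hw⟩ := hex
    refine ⟨Fin.snoc V (fun k => sg (w k)), ?_, ?_⟩
    · intro i k
      refine Fin.lastCases ?_ ?_ i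
      · simp only [Fin.snoc_last]; exact sg_pm (w k)
      · intro i'; simp only [Fin.snoc_castSucc]; exact hent i' k
    · intro i j hij
      revert hij
      refine Fin.lastCases ?_ ?_ i
      · refine Fin.lastCases ?_ ?_ j
        · intro hij; exact absurd rfl hij
        · intro j' _
          simp only [Fin.snoc_last, Fin.snoc_castSucc]
          have hcomm : ∑ k, sg (w k) * V j' k = ∑ k, V j' k * sg (w k) :=
            Finset.sum_congr rfl fun k _ => mul_comm _ _
          rw [hcomm]; exact hw j'
      · intro i'
        refine Fin.lastCases ?_ ?_ j
        · intro _
          simp only [Fin.snoc_last, Fin.snoc_castSucc]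
          exact hw i'
        · intro j' hij'
          simp only [Fin.snoc_castSucc]
          refine hpair i' j' ?_
          intro hcon
          exact hij' (by rw [hcon])

open scoped BigOperators

-- real Gram operator
lemma gram_real (N D : ℕ) (hD : 0 < D) (V : Fin N → Fin D → ℝ) :
    ∃ L : (Fin N → ℝ) →ₗ[ℝ] (Fin N → ℝ), Module.finrank ℝ (LinearMap.range L) ≤ D ∧
      ∀ i j : Fin N, L (Pi.single j 1) i = (∑ k, V i k * V j k) / D := by
  let F : (Fin N → ℝ) →ₗ[ℝ] (Fin D → ℝ) :=
    ∑ j : Fin N, (LinearMap.toSpanSingleton ℝ (Fin D → ℝ) (V j)).comp (LinearMap.proj j)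
  let G : (Fin D → ℝ) →ₗ[ℝ] (Fin N → ℝ) :=
    LinearMap.pi (fun i => ∑ k : Fin D, (V i k / D) • (LinearMap.proj k))
  refine ⟨G.comp F, ?_, ?_⟩
  · calc Module.finrank ℝ (LinearMap.range (G.comp F))
        ≤ Module.finrank ℝ (LinearMap.range G) :=
          Submodule.finrank_mono (LinearMap.range_comp_le_range F G)
      _ ≤ Module.finrank ℝ (Fin D → ℝ) := LinearMap.finrank_range_le G
      _ = D := by simp [Module.finrank_pi]
  · intro i j
    have hF : F (Pi.single j 1) = V j := by
      simp only [F, LinearMap.sum_apply, LinearMap.comp_apply, LinearMap.proj_apply,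
        LinearMap.toSpanSingleton_apply]
      rw [Finset.sum_eq_single j]
      · simp
      · intro b _ hb
        simp [Pi.single_apply, hb]
      · intro h; exact absurd (Finset.mem_univ j) h
    rw [LinearMap.comp_apply, hF]
    simp only [G, LinearMap.pi_apply, LinearMap.sum_apply, LinearMap.smul_apply,
      LinearMap.proj_apply, smul_eq_mul]
    rw [Finset.sum_div]
    exact Finset.sum_congr rfl fun k _ => by ring

-- complex Gram operator
lemma gram_complex (N d : ℕ) [NeZero d] (W : Fin N → ZMod d → ℂ) :
    ∃ L : (Fin N → ℝ) →ₗ[ℝ] (Fin N → ℝ), Module.finrank ℝ (LinearMap.range L) ≤ 2 * d ∧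
      ∀ i j : Fin N, L (Pi.single j 1) i
        = (∑ t, (starRingEnd ℂ) (W i t) * W j t).re / d := by
  let F : (Fin N → ℝ) →ₗ[ℝ] (ZMod d → ℂ) :=
    ∑ j : Fin N, (LinearMap.toSpanSingleton ℝ (ZMod d → ℂ) (W j)).comp (LinearMap.proj j)
  let innerL : Fin N → ((ZMod d → ℂ) →ₗ[ℂ] ℂ) :=
    fun i => ∑ t : ZMod d, (starRingEnd ℂ) (W i t) • (LinearMap.proj t)
  let G : (ZMod d → ℂ) →ₗ[ℝ] (Fin N → ℝ) :=
    LinearMap.pi (fun i => ((1:ℝ)/d) • (Complex.reLm.comp ((innerL i).restrictScalars ℝ)))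
  refine ⟨G.comp F, ?_, ?_⟩
  · calc Module.finrank ℝ (LinearMap.range (G.comp F))
        ≤ Module.finrank ℝ (LinearMap.range G) :=
          Submodule.finrank_mono (LinearMap.range_comp_le_range F G)
      _ ≤ Module.finrank ℝ (ZMod d → ℂ) := LinearMap.finrank_range_le G
      _ = 2 * d := by
          rw [Module.finrank_pi_fintype ℝ]
          simp [Complex.finrank_real_complex, Finset.card_univ, mul_comm]
  · intro i j
    have hF : F (Pi.single j 1) = W j := by
      simp only [F, LinearMap.sum_apply, LinearMap.comp_apply, LinearMap.proj_apply,
        LinearMap.toSpanSingleton_apply]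
      rw [Finset.sum_eq_single j]
      · simp
      · intro b _ hb
        simp [Pi.single_apply, hb]
      · intro h; exact absurd (Finset.mem_univ j) h
    rw [LinearMap.comp_apply, hF]
    simp only [G, LinearMap.pi_apply, LinearMap.smul_apply, LinearMap.comp_apply,
      LinearMap.restrictScalars_apply, Complex.reLm_coe, smul_eq_mul]
    have hinnerLL : (innerL i) (W j) = ∑ t, (starRingEnd ℂ) (W i t) * W j t := by
      simp only [innerL, LinearMap.sum_apply, LinearMap.smul_apply, LinearMap.proj_apply,
        smul_eq_mul]
    rw [hinnerLL]
    ring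

open scoped BigOperators
open Complex

noncomputable section

def ee (d : ℕ) [NeZero d] (z : ZMod d) : ℂ :=
  Complex.exp (((2 * Real.pi * z.val / d : ℝ) : ℂ) * Complex.I)

variable (d : ℕ) [NeZero d]

lemma ee_zero : ee d 0 = 1 := by
  simp [ee, ZMod.val_zero]

lemma abs_ee (z : ZMod d) : ‖ee d z‖ = 1 :=
  Complex.norm_exp_ofReal_mul_I _

lemma ee_ne_zero (z : ZMod d) : ee d z ≠ 0 := Complex.exp_ne_zero _

lemma ee_add (z w : ZMod d) : ee d (z + w) = ee d z * ee d w := by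
  have hd0 : (d:ℝ) ≠ 0 := Nat.cast_ne_zero.2 (NeZero.ne d)
  rw [ee, ee, ee, ← Complex.exp_add, Complex.exp_eq_exp_iff_exists_int]
  refine ⟨-(((z.val + w.val) / d : ℕ) : ℤ), ?_⟩
  have hq : ((z.val + w.val) % d : ℕ) + d * ((z.val + w.val) / d) = z.val + w.val :=
    Nat.mod_add_div _ _
  have h2 := congrArg (Nat.cast : ℕ → ℝ) hq
  push_cast at h2
  have hr : (2 * Real.pi * ((z + w).val) / d : ℝ)
      = 2 * Real.pi * z.val / d + 2 * Real.pi * w.val / d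
        + ((-(((z.val + w.val) / d : ℕ) : ℤ) : ℤ) : ℝ) * (2 * Real.pi) := by
    rw [ZMod.val_add]
    have hA : (((z.val + w.val) % d : ℕ) : ℝ)
        = (z.val : ℝ) + (w.val : ℝ) - d * (((z.val + w.val) / d : ℕ) : ℝ) := by linarith [h2]
    rw [hA]
    simp only [Int.cast_neg, Int.cast_natCast]
    field_simp
    ring
  calc ((2 * Real.pi * ((z + w).val) / d : ℝ) : ℂ) * Complex.I
      = ((2 * Real.pi * z.val / d + 2 * Real.pi * w.val / d
        + ((-(((z.val + w.val) / d : ℕ) : ℤ) : ℤ) : ℝ) * (2 * Real.pi) : ℝ) : ℂ) * Complex.I := by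
        rw [hr]
    _ = ((2 * Real.pi * z.val / d : ℝ) : ℂ) * Complex.I
        + ((2 * Real.pi * w.val / d : ℝ) : ℂ) * Complex.I
        + ((-(((z.val + w.val) / d : ℕ) : ℤ) : ℤ) : ℂ) * (2 * (Real.pi : ℂ) * Complex.I) := by
        push_cast
        ring

lemma ee_neg (z : ZMod d) : ee d (-z) = (ee d z)⁻¹ := by
  have h : ee d z * ee d (-z) = 1 := by
    rw [← ee_add, add_neg_cancel, ee_zero]
  exact eq_inv_of_mul_eq_one_right h

lemma conj_ee (z : ZMod d) : (starRingEnd ℂ) (ee d z) = ee d (-z) := by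
  rw [ee_neg]
  exact (Complex.inv_eq_conj (abs_ee d z)).symm

lemma ee_one_ne_one (hd : 1 < d) : ee d 1 ≠ 1 := by
  intro h
  have hv1 : (1 : ZMod d).val = 1 := by
    rw [ZMod.val_one_eq_one_mod]
    exact Nat.mod_eq_of_lt hd
  rw [ee, hv1] at h
  obtain ⟨n, hn⟩ := Complex.exp_eq_one_iff.1 h
  have hd0 : (0:ℝ) < d := by
    have : 0 < d := Nat.lt_of_lt_of_le Nat.zero_lt_one hd.le
    exact_mod_cast this
  have hd1R : (1:ℝ) < d := by exact_mod_cast hd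
  have hpi := Real.pi_pos
  have hn' : ((2 * Real.pi * ((1:ℕ):ℝ) / d : ℝ) : ℂ) * Complex.I
      = ((n * (2 * Real.pi) : ℝ) : ℂ) * Complex.I := by
    rw [hn]
    push_cast
    ring
  have hne : (2 * Real.pi * ((1:ℕ):ℝ) / d : ℝ) = n * (2 * Real.pi) :=
    Complex.ofReal_inj.1 (mul_right_cancel₀ Complex.I_ne_zero hn')
  rw [Nat.cast_one] at hne
  have hub : 2 * Real.pi * 1 / d < 2 * Real.pi := by
    rw [div_lt_iff₀ hd0]
    nlinarith
  have hlb : (0:ℝ) < 2 * Real.pi * 1 / d := by positivity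
  rcases le_or_gt n 0 with hn0 | hn0
  · have hnR : (n:ℝ) ≤ 0 := by exact_mod_cast hn0
    nlinarith
  · have hnR : (1:ℝ) ≤ n := by exact_mod_cast hn0
    nlinarith

lemma sum_ee (hd : 1 < d) : ∑ x : ZMod d, ee d x = 0 := by
  have hshift : ∑ x : ZMod d, ee d (x + 1) = ∑ x : ZMod d, ee d x :=
    Fintype.sum_equiv (Equiv.addRight (1 : ZMod d)) _ _ (fun x => rfl)
  have hexp : ∑ x : ZMod d, ee d (x + 1) = (∑ x : ZMod d, ee d x) * ee d 1 := by
    rw [Finset.sum_mul]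
    exact Finset.sum_congr rfl fun x _ => ee_add d x 1
  have hzero : (∑ x : ZMod d, ee d x) * (ee d 1 - 1) = 0 := by
    rw [mul_sub, mul_one, ← hexp, hshift, sub_self]
  rcases mul_eq_zero.1 hzero with h | h
  · exact h
  · exact absurd (sub_eq_zero.1 h) (ee_one_ne_one d hd)

lemma sum_ee_mul [Fact (Nat.Prime d)] (a : ZMod d) (ha : a ≠ 0) :
    ∑ x : ZMod d, ee d (a * x) = 0 := by
  have hd1 : 1 < d := (Fact.out : Nat.Prime d).one_lt
  calc ∑ x : ZMod d, ee d (a * x) = ∑ x : ZMod d, ee d x :=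
        Fintype.sum_equiv (Equiv.mulLeft₀ a ha) (fun x => ee d (a * x)) (ee d) (fun x => rfl)
    _ = 0 := sum_ee d hd1

lemma gauss [Fact (Nat.Prime d)] (h2 : (2 : ZMod d) ≠ 0) (c b : ZMod d) (hc : c ≠ 0) :
    ‖∑ x : ZMod d, ee d (c * x ^ 2 + b * x)‖ = Real.sqrt d := by
  set S := ∑ x : ZMod d, ee d (c * x ^ 2 + b * x) with hS
  have key : (starRingEnd ℂ) S * S = (d : ℂ) := by
    rw [hS, map_sum, Finset.sum_mul]
    have hterm : ∀ y : ZMod d, (starRingEnd ℂ) (ee d (c * y ^ 2 + b * y)) * S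
        = ∑ u : ZMod d, ee d ((2 * c * u) * y + (c * u ^ 2 + b * u)) := by
      intro y
      rw [conj_ee, hS, Finset.mul_sum]
      refine (Fintype.sum_equiv (Equiv.addLeft y)
        (fun u => ee d ((2 * c * u) * y + (c * u ^ 2 + b * u)))
        (fun x => ee d (-(c * y ^ 2 + b * y)) * ee d (c * x ^ 2 + b * x)) ?_).symm
      intro u
      show ee d ((2 * c * u) * y + (c * u ^ 2 + b * u))
          = ee d (-(c * y ^ 2 + b * y)) * ee d (c * (y + u) ^ 2 + b * (y + u))
      rw [← ee_add]
      congr 1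
      ring
    rw [Finset.sum_congr rfl fun y _ => hterm y, Finset.sum_comm]
    have hfac : ∀ u : ZMod d, ∑ y : ZMod d, ee d ((2 * c * u) * y + (c * u ^ 2 + b * u))
        = (∑ y : ZMod d, ee d ((2 * c * u) * y)) * ee d (c * u ^ 2 + b * u) := by
      intro u
      rw [Finset.sum_mul]
      exact Finset.sum_congr rfl fun y _ => ee_add d _ _
    rw [Finset.sum_congr rfl fun u _ => hfac u]
    rw [Finset.sum_eq_single 0]
    · have : ∀ y : ZMod d, ee d ((2 * c * 0) * y) = 1 := by
        intro y
        have : (2 * c * 0) * y = 0 := by ring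
        rw [this, ee_zero]
      rw [Finset.sum_congr rfl fun y _ => this y]
      have h0 : c * 0 ^ 2 + b * 0 = 0 := by ring
      rw [h0, ee_zero, Finset.sum_const, Finset.card_univ, ZMod.card]
      simp
    · intro u _ hu
      have ha : (2 * c * u) ≠ 0 := by
        have h2c : (2 : ZMod d) * c ≠ 0 := mul_ne_zero h2 hc
        exact mul_ne_zero h2c hu
      rw [sum_ee_mul d _ ha, zero_mul]
    · intro h; exact absurd (Finset.mem_univ 0) h
  have hnormSq : Complex.normSq S = d := by
    have : S * (starRingEnd ℂ) S = (d : ℂ) := by rw [mul_comm]; exact key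
    rw [Complex.mul_conj] at this
    exact_mod_cast this
  rw [Complex.norm_def, hnormSq]

lemma mub_vectors (hd2 : (2 : ZMod d) ≠ 0) [Fact (Nat.Prime d)] :
    ∃ V : (ZMod d × ZMod d) → ZMod d → ℂ,
      (∀ p, ∑ t, (starRingEnd ℂ) (V p t) * V p t = (d : ℂ)) ∧
      (∀ p q, p ≠ q → ‖∑ t, (starRingEnd ℂ) (V p t) * V q t‖ ≤ Real.sqrt d) := by
  refine ⟨fun p t => ee d (p.1 * t ^ 2 + p.2 * t), ?_, ?_⟩
  · intro p
    have hone : ∀ t : ZMod d, (starRingEnd ℂ) (ee d (p.1 * t ^ 2 + p.2 * t))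
        * ee d (p.1 * t ^ 2 + p.2 * t) = 1 := by
      intro t
      rw [conj_ee, ← ee_add, neg_add_cancel, ee_zero]
    rw [Finset.sum_congr rfl fun t _ => hone t, Finset.sum_const, Finset.card_univ, ZMod.card]
    simp
  · intro p q hpq
    have hterm : ∀ t : ZMod d, (starRingEnd ℂ) (ee d (p.1 * t ^ 2 + p.2 * t))
        * ee d (q.1 * t ^ 2 + q.2 * t)
        = ee d ((q.1 - p.1) * t ^ 2 + (q.2 - p.2) * t) := by
      intro t
      rw [conj_ee, ← ee_add]
      congr 1
      ring
    rw [Finset.sum_congr rfl fun t _ => hterm t]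
    rcases eq_or_ne q.1 p.1 with h | h
    · have hb : q.2 - p.2 ≠ 0 := by
        intro h0
        exact hpq (Prod.ext h.symm (sub_eq_zero.1 h0).symm)
      have hsimp : ∑ t : ZMod d, ee d ((q.1 - p.1) * t ^ 2 + (q.2 - p.2) * t)
          = ∑ t : ZMod d, ee d ((q.2 - p.2) * t) := by
        refine Finset.sum_congr rfl fun t _ => ?_
        congr 1
        rw [h]
        ring
      rw [hsimp, sum_ee_mul d _ hb]
      simp [Real.sqrt_nonneg]
    · rw [gauss d hd2 _ _ (sub_ne_zero.2 h)]


-- ===================== construction lemmas =====================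

lemma approx_le_one {p₁ : ℝ} (h1 : 0 < p₁) (h2 : p₁ ≤ 1) (N n : ℕ) (hn : 1 ≤ n) :
    approxNumber (ENNReal.ofReal p₁) ∞ N n ≤ 1 := by
  refine bridge h1 h2 zero_le_one (0 : (Fin N → ℝ) →ₗ[ℝ] (Fin N → ℝ)) ?_ ?_
  · rw [LinearMap.range_zero]
    simp
    omega
  · intro i j
    simp only [LinearMap.zero_apply, Pi.zero_apply, sub_zero]
    rcases eq_or_ne i j with h | h
    · simp [h, Pi.single_apply]
    · simp [Pi.single_apply, Ne.symm h]

lemma approx_le_zero {p₁ : ℝ} (h1 : 0 < p₁) (h2 : p₁ ≤ 1) (N n : ℕ) (hn : N < n) :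
    approxNumber (ENNReal.ofReal p₁) ∞ N n ≤ 0 := by
  refine bridge h1 h2 le_rfl (LinearMap.id : (Fin N → ℝ) →ₗ[ℝ] (Fin N → ℝ)) ?_ ?_
  · rw [LinearMap.range_id]
    rw [finrank_top]
    simpa [Module.finrank_pi] using hn
  · intro i j
    simp

lemma approx_le_chernoff {p₁ : ℝ} (h1 : 0 < p₁) (h2 : p₁ ≤ 1) (N n : ℕ)
    (hN : 1 ≤ N) (hn : 2 ≤ n) :
    approxNumber (ENNReal.ofReal p₁) ∞ N n
      ≤ Real.sqrt (2 * (n - 1 : ℕ) * Real.log (2 * N)) / (n - 1 : ℕ) := by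
  set D := n - 1 with hD
  have hD1 : 1 ≤ D := by omega
  have hDpos : (0:ℝ) < (D:ℝ) := by exact_mod_cast hD1
  obtain ⟨V, hpm, hpair⟩ := exists_good_vectors N D hD1 hN
  obtain ⟨L, hrank, hL⟩ := gram_real N D hD1 V
  have hεnn : 0 ≤ Real.sqrt (2 * (D:ℕ) * Real.log (2 * N)) / (D:ℕ) :=
    div_nonneg (Real.sqrt_nonneg _) hDpos.le
  refine bridge h1 h2 hεnn L (lt_of_le_of_lt hrank (by omega)) ?_
  intro i j
  rw [hL]
  rcases eq_or_ne i j with h | h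
  · subst h
    have hdiag : ∑ k, V i k * V i k = (D:ℝ) := by
      have : ∀ k, V i k * V i k = 1 := by
        intro k
        rcases hpm i k with h | h <;> rw [h] <;> norm_num
      rw [Finset.sum_congr rfl fun k _ => this k, Finset.sum_const, Finset.card_univ,
        Fintype.card_fin, nsmul_eq_mul, mul_one]
    rw [hdiag, div_self hDpos.ne']
    simp [Pi.single_apply]
    positivity
  · have hsingle : (Pi.single j 1 : Fin N → ℝ) i = 0 := by
      simp [Pi.single_apply, h]
    rw [hsingle, zero_sub, abs_neg, abs_div, abs_of_pos hDpos]
    gcongr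
    exact hpair i j h

lemma approx_le_mub {p₁ : ℝ} (h1 : 0 < p₁) (h2 : p₁ ≤ 1) (N n d : ℕ)
    (hd : Nat.Prime d) (hd2 : d ≠ 2) (hNd : N ≤ d * d) (hdn : 2 * d < n) :
    approxNumber (ENNReal.ofReal p₁) ∞ N n ≤ Real.sqrt d / d := by
  haveI : Fact (Nat.Prime d) := ⟨hd⟩
  haveI : NeZero d := ⟨hd.pos.ne'⟩
  have hdpos : (0:ℝ) < d := by exact_mod_cast hd.pos
  have h2z : (2 : ZMod d) ≠ 0 := by
    intro hzero
    have hdvd : (d:ℕ) ∣ 2 := by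
      have := (ZMod.natCast_eq_zero_iff 2 d).1 (by exact_mod_cast hzero)
      exact this
    have := Nat.le_of_dvd (by norm_num) hdvd
    have := hd.two_le
    omega
  obtain ⟨V, hdiag, hoff⟩ := mub_vectors d h2z
  set ι : Fin N → ZMod d × ZMod d := fun i => (((i : ℕ) / d : ℕ), ((i : ℕ) % d : ℕ)) with hι
  have hinj : Function.Injective ι := by
    intro i j hij
    rw [hι, Prod.mk.injEq] at hij
    have hi1 : (i:ℕ) / d < d := (Nat.div_lt_iff_lt_mul hd.pos).2 (lt_of_lt_of_le i.2 hNd)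
    have hj1 : (j:ℕ) / d < d := (Nat.div_lt_iff_lt_mul hd.pos).2 (lt_of_lt_of_le j.2 hNd)
    have hi2 : (i:ℕ) % d < d := Nat.mod_lt _ hd.pos
    have hj2 : (j:ℕ) % d < d := Nat.mod_lt _ hd.pos
    have e1 : (i:ℕ) / d = (j:ℕ) / d := by
      have hv := congrArg ZMod.val hij.1
      rwa [ZMod.val_cast_of_lt hi1, ZMod.val_cast_of_lt hj1] at hv
    have e2 : (i:ℕ) % d = (j:ℕ) % d := by
      have hv := congrArg ZMod.val hij.2
      rwa [ZMod.val_cast_of_lt hi2, ZMod.val_cast_of_lt hj2] at hv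
    have e1' : d * ((i:ℕ)/d) = d * ((j:ℕ)/d) := by rw [e1]
    have hdm1 := Nat.div_add_mod (i:ℕ) d
    have hdm2 := Nat.div_add_mod (j:ℕ) d
    have : (i:ℕ) = (j:ℕ) := by omega
    exact Fin.ext this
  obtain ⟨L, hrank, hL⟩ := gram_complex N d (fun i => V (ι i))
  have hεnn : 0 ≤ Real.sqrt d / d := by positivity
  refine bridge h1 h2 hεnn L (lt_of_le_of_lt hrank hdn) ?_
  intro i j
  rw [hL]
  rcases eq_or_ne i j with h | h
  · subst h
    rw [hdiag (ι i)]
    have hre : ((d:ℂ)).re = (d:ℝ) := by simp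
    rw [hre, div_self hdpos.ne']
    have hs1 : (Pi.single i 1 : Fin N → ℝ) i = 1 := by simp [Pi.single_apply]
    rw [hs1, sub_self, abs_zero]
    positivity
  · have hsingle : (Pi.single j 1 : Fin N → ℝ) i = 0 := by simp [Pi.single_apply, h]
    rw [hsingle, zero_sub, abs_neg, abs_div, abs_of_pos hdpos]
    have habs : |(∑ t, (starRingEnd ℂ) (V (ι i) t) * V (ι j) t).re| ≤ Real.sqrt d :=
      le_trans (Complex.abs_re_le_norm _) (hoff _ _ (fun hc => h (hinj hc)))
    gcongr

-- ===================== final theorem =====================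


/-- For `0 < p₁ ≤ 1`, `0 < λ < 1` and `h = 2(1-λ)` there is `C > 0` with
`sup_n n^{1/h}·a_n(id : ℓ_{p₁}^N → ℓ_∞^N) ≤ C·N^{λ/(2(1-λ))}` for every `N`. -/
theorem approx_ideal_norm_critical (p₁ lam : ℝ) (h1 : 0 < p₁) (h2 : p₁ ≤ 1)
    (hl1 : 0 < lam) (hl2 : lam < 1) :
    ∃ C : ℝ, 0 < C ∧ ∀ N n : ℕ, 1 ≤ n →
      (n : ℝ) ^ (1 / (2 * (1 - lam))) * approxNumber (ENNReal.ofReal p₁) ∞ N n ≤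
        C * (N : ℝ) ^ (lam / (2 * (1 - lam))) := by
  set α := 1 / (2 * (1 - lam)) with hα
  set β := lam / (2 * (1 - lam)) with hβ
  have hh : 0 < 2 * (1 - lam) := by linarith
  have hαpos : 0 < α := by rw [hα]; positivity
  have hβpos : 0 < β := by rw [hβ]; positivity
  have hαβ : α - 1/2 = β := by
    rw [hα, hβ]
    have hne : 1 - lam ≠ 0 := by linarith
    field_simp
    ring
  have h9β : (0:ℝ) < 9 ^ β := Real.rpow_pos_of_pos (by norm_num) β
  have hKsq : (0:ℝ) ≤ Real.sqrt (Real.log 2 + 1/β) := Real.sqrt_nonneg _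
  set K := 2 * (9:ℝ) ^ β * Real.sqrt (Real.log 2 + 1/β) + 3 + Real.sqrt 8 with hK
  have hK3 : (3:ℝ) ≤ K := by
    rw [hK]
    have h8 : (0:ℝ) ≤ Real.sqrt 8 := Real.sqrt_nonneg _
    nlinarith
  have hKpos : 0 < K := by linarith
  refine ⟨K, hKpos, ?_⟩
  intro N n hn
  have hnR : (1:ℝ) ≤ n := by exact_mod_cast hn
  have hnpos : (0:ℝ) < n := by linarith
  by_cases hNn : N < n
  · have ha := approx_le_zero h1 h2 N n hNn
    have hle0 : (n:ℝ) ^ α * approxNumber (ENNReal.ofReal p₁) ∞ N n ≤ 0 := by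
      have := mul_le_mul_of_nonneg_left ha (Real.rpow_nonneg hnpos.le α)
      simpa using this
    refine le_trans hle0 ?_
    positivity
  push_neg at hNn
  have hN1 : 1 ≤ N := le_trans hn hNn
  have hNR : (1:ℝ) ≤ N := by exact_mod_cast hN1
  have hNpos : (0:ℝ) < N := by linarith
  have hNβ1 : (1:ℝ) ≤ (N:ℝ) ^ β := Real.one_le_rpow hNR hβpos.le
  have hNβ0 : (0:ℝ) ≤ (N:ℝ) ^ β := by linarith
  have hnN : (n:ℝ) ≤ N := by exact_mod_cast hNn
  have hnβN : (n:ℝ) ^ β ≤ (N:ℝ) ^ β := Real.rpow_le_rpow hnpos.le hnN hβpos.le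
  have hsqrtN1 : (1:ℝ) ≤ Real.sqrt N := Real.one_le_sqrt.2 hNR
  have hanonneg0 : (0:ℝ) ≤ (n:ℝ) ^ α := Real.rpow_nonneg hnpos.le α
  -- the key rpow identity : n^α / sqrt n = n^β
  have hpowid : (n:ℝ) ^ α / Real.sqrt n = (n:ℝ) ^ β := by
    rw [Real.sqrt_eq_rpow, ← Real.rpow_sub hnpos, hαβ]
  rcases eq_or_lt_of_le hn with hn1 | hn2
  · -- n = 1
    have ha := approx_le_one h1 h2 N n hn
    have h1n : ((n:ℝ)) = 1 := by exact_mod_cast hn1.symm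
    rw [h1n, Real.one_rpow, one_mul]
    calc approxNumber (ENNReal.ofReal p₁) ∞ N n ≤ 1 := ha
      _ ≤ K * (N:ℝ) ^ β := by nlinarith
  · have hn2' : 2 ≤ n := hn2
    set x := (n - 1) / 4 with hx
    have hdm4 := Nat.div_add_mod (n - 1) 4
    by_cases hmub : 2 ≤ x ∧ N ≤ x * x
    · -- MUB case
      obtain ⟨hx2, hNx⟩ := hmub
      obtain ⟨d, hdprime, hdx, hdx2⟩ := Nat.exists_prime_lt_and_le_two_mul x (by omega)
      have hd2 : d ≠ 2 := by omega
      have hNd : N ≤ d * d := le_trans hNx (Nat.mul_le_mul hdx.le hdx.le)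
      have hdn : 2 * d < n := by omega
      have ha := approx_le_mub h1 h2 N n d hdprime hd2 hNd hdn
      have hdpos : (0:ℝ) < d := by exact_mod_cast hdprime.pos
      have hn4d : (n:ℝ) ≤ 4 * d := by
        have : n ≤ 4 * d := by omega
        exact_mod_cast this
      have hbound : Real.sqrt d / d ≤ 2 / Real.sqrt n := by
        rw [Real.sqrt_div_self']
        rw [div_le_div_iff₀ (Real.sqrt_pos.2 hdpos) (Real.sqrt_pos.2 hnpos)]
        have h4d : Real.sqrt n ≤ 2 * Real.sqrt d := by
          have h2d : (2:ℝ) * Real.sqrt d = Real.sqrt (4 * d) := by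
            rw [show (4:ℝ) * d = 2^2 * d by ring, Real.sqrt_mul (by positivity),
              Real.sqrt_sq (by norm_num)]
          rw [h2d]
          exact Real.sqrt_le_sqrt hn4d
        linarith
      calc (n:ℝ) ^ α * approxNumber (ENNReal.ofReal p₁) ∞ N n
          ≤ (n:ℝ) ^ α * (Real.sqrt d / d) := mul_le_mul_of_nonneg_left ha hanonneg0
        _ ≤ (n:ℝ) ^ α * (2 / Real.sqrt n) := mul_le_mul_of_nonneg_left hbound hanonneg0
        _ = 2 * ((n:ℝ) ^ α / Real.sqrt n) := by ring
        _ = 2 * (n:ℝ) ^ β := by rw [hpowid]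
        _ ≤ 2 * (N:ℝ) ^ β := by linarith
        _ ≤ K * (N:ℝ) ^ β := by nlinarith
    · -- Chernoff case
      have hn9 : (n:ℝ) ≤ 9 * Real.sqrt N := by
        rcases not_and_or.1 hmub with hx1 | hxx
        · push_neg at hx1
          have hn8 : n ≤ 8 := by omega
          have : (n:ℝ) ≤ 8 := by exact_mod_cast hn8
          nlinarith
        · push_neg at hxx
          have hxR : (x:ℝ) < Real.sqrt N := by
            rw [Real.lt_sqrt (Nat.cast_nonneg x)]
            have hlt : ((x:ℝ)) * (x:ℝ) < N := by exact_mod_cast hxx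
            nlinarith [hlt]
          have hn4x : n ≤ 4 * x + 4 := by omega
          have : (n:ℝ) ≤ 4 * x + 4 := by exact_mod_cast hn4x
          nlinarith
      have ha := approx_le_chernoff h1 h2 N n hN1 hn2'
      set lg := Real.log (2 * N) with hlg
      have hlg0 : 0 ≤ lg := Real.log_nonneg (by linarith)
      have hDR : ((n - 1 : ℕ):ℝ) = (n:ℝ) - 1 := by
        push_cast [Nat.cast_sub hn]
        ring
      have hDpos : (0:ℝ) < ((n - 1 : ℕ):ℝ) := by
        rw [hDR]
        have : (2:ℝ) ≤ n := by exact_mod_cast hn2'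
        linarith
      have hDhalf : (n:ℝ) ≤ 2 * ((n - 1 : ℕ):ℝ) := by
        rw [hDR]
        have : (2:ℝ) ≤ n := by exact_mod_cast hn2'
        linarith
      have hstep1 : Real.sqrt (2 * ((n-1:ℕ):ℝ) * lg) / ((n-1:ℕ):ℝ) ≤ 2 * Real.sqrt lg / Real.sqrt n := by
        generalize hDD : ((n-1:ℕ):ℝ) = DD at hDpos hDhalf ⊢
        have hL : Real.sqrt (2 * DD * lg) / DD
            = Real.sqrt (2 * lg / DD) := by
          have h1' : 2 * DD * lg = DD^2 * (2 * lg / DD) := by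
            field_simp
          rw [h1', Real.sqrt_mul (by positivity), Real.sqrt_sq hDpos.le,
            mul_div_cancel_left₀ _ hDpos.ne']
        have hR : 2 * Real.sqrt lg / Real.sqrt n = Real.sqrt (4 * lg / n) := by
          rw [Real.sqrt_div (by positivity), show (4:ℝ) * lg = 2^2 * lg by ring,
            Real.sqrt_mul (by positivity), Real.sqrt_sq (by norm_num)]
        rw [hL, hR]
        apply Real.sqrt_le_sqrt
        rw [div_le_div_iff₀ hDpos hnpos]
        nlinarith [hlg0, hDhalf]
      calc (n:ℝ) ^ α * approxNumber (ENNReal.ofReal p₁) ∞ N n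
          ≤ (n:ℝ) ^ α * (Real.sqrt (2 * ((n-1:ℕ):ℝ) * lg) / ((n-1:ℕ):ℝ)) :=
            mul_le_mul_of_nonneg_left ha hanonneg0
        _ ≤ (n:ℝ) ^ α * (2 * Real.sqrt lg / Real.sqrt n) :=
            mul_le_mul_of_nonneg_left hstep1 hanonneg0
        _ = 2 * Real.sqrt lg * ((n:ℝ) ^ α / Real.sqrt n) := by ring
        _ = 2 * Real.sqrt lg * (n:ℝ) ^ β := by rw [hpowid]
        _ ≤ K * (N:ℝ) ^ β := ?_
      -- final: 2 √lg n^β ≤ K N^β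
      have hlgb : lg ≤ (Real.log 2 + 1/β) * (N:ℝ) ^ β := by
        rw [hlg, Real.log_mul (by norm_num) (by positivity)]
        have hlogN : Real.log N ≤ (N:ℝ) ^ β / β := Real.log_le_rpow_div hNpos.le hβpos
        have hlog2 : Real.log 2 ≤ Real.log 2 * (N:ℝ) ^ β := by
          nlinarith [Real.log_nonneg (by norm_num : (1:ℝ) ≤ 2)]
        have : (N:ℝ)^β / β = (1/β) * (N:ℝ)^β := by ring
        nlinarith [hlogN, hlog2]
      have hsqlg : Real.sqrt lg ≤ Real.sqrt (Real.log 2 + 1/β) * ((N:ℝ) ^ β) ^ ((1:ℝ)/2) := by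
        calc Real.sqrt lg ≤ Real.sqrt ((Real.log 2 + 1/β) * (N:ℝ) ^ β) := Real.sqrt_le_sqrt hlgb
          _ = Real.sqrt (Real.log 2 + 1/β) * Real.sqrt ((N:ℝ) ^ β) := by
              apply Real.sqrt_mul
              nlinarith [Real.log_nonneg (by norm_num : (1:ℝ) ≤ 2), hβpos]
          _ = Real.sqrt (Real.log 2 + 1/β) * ((N:ℝ) ^ β) ^ ((1:ℝ)/2) := by
              rw [Real.sqrt_eq_rpow ((N:ℝ) ^ β)]
      have hnβ9 : (n:ℝ) ^ β ≤ 9 ^ β * ((N:ℝ) ^ ((1:ℝ)/2)) ^ β := by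
        calc (n:ℝ) ^ β ≤ (9 * Real.sqrt N) ^ β := Real.rpow_le_rpow hnpos.le hn9 hβpos.le
          _ = 9 ^ β * (Real.sqrt N) ^ β := Real.mul_rpow (by norm_num) (Real.sqrt_nonneg _)
          _ = 9 ^ β * ((N:ℝ) ^ ((1:ℝ)/2)) ^ β := by rw [Real.sqrt_eq_rpow (N:ℝ)]
      have hhalfs : ((N:ℝ) ^ β) ^ ((1:ℝ)/2) * ((N:ℝ) ^ ((1:ℝ)/2)) ^ β = (N:ℝ) ^ β := by
        rw [← Real.rpow_mul hNpos.le, ← Real.rpow_mul hNpos.le, ← Real.rpow_add hNpos]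
        congr 1
        ring
      have hx1 : (0:ℝ) ≤ ((N:ℝ) ^ β) ^ ((1:ℝ)/2) := Real.rpow_nonneg hNβ0 _
      have hx2 : (0:ℝ) ≤ ((N:ℝ) ^ ((1:ℝ)/2)) ^ β := Real.rpow_nonneg (Real.rpow_nonneg hNpos.le _) _
      have hsq0 : (0:ℝ) ≤ Real.sqrt lg := Real.sqrt_nonneg _
      calc 2 * Real.sqrt lg * (n:ℝ) ^ β
          ≤ 2 * (Real.sqrt (Real.log 2 + 1/β) * ((N:ℝ) ^ β) ^ ((1:ℝ)/2))
            * (9 ^ β * ((N:ℝ) ^ ((1:ℝ)/2)) ^ β) := by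
            have hb1 : (0:ℝ) ≤ (n:ℝ) ^ β := Real.rpow_nonneg hnpos.le _
            apply mul_le_mul
            · nlinarith
            · exact hnβ9
            · exact hb1
            · positivity
        _ = (2 * 9 ^ β * Real.sqrt (Real.log 2 + 1/β))
            * (((N:ℝ) ^ β) ^ ((1:ℝ)/2) * ((N:ℝ) ^ ((1:ℝ)/2)) ^ β) := by ring
        _ = (2 * 9 ^ β * Real.sqrt (Real.log 2 + 1/β)) * (N:ℝ) ^ β := by rw [hhalfs]
        _ ≤ K * (N:ℝ) ^ β := by
            apply mul_le_mul_of_nonneg_right _ hNβ0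
            rw [hK]
            have h8 : (0:ℝ) ≤ Real.sqrt 8 := Real.sqrt_nonneg _
            linarith
end
end
end
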